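/- In a chores-only lexicographic instance, let A be a rank-maximal allocation and suppose some agent i receives its worst chore, i.e., the ⊳_i-greatest element o of M belongs to A_i. Then o is the worst chore of every agent: o is the ⊳_j-greatest element of M for every agent j ∈ N. -/

import Mathlib

attribute [local instance 10] Classical.propDecidable

/-- A lexicographic mixed instance: each agent `i` has a set `G i` of goods
(its complement being the chores `C i`) and a strict linear importance order
`⊳_i` on the items, encoded as a linear order where larger means more important. -/
structure LexInstance (N M : Type) [Fintype N] [Fintype M] [DecidableEq M] where
  G : N → Finset M
  ord : N → LinearOrder M

namespace LexInstance

variable {N M : Type} [Fintype N] [Fintype M] [DecidableEq M]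

/-- `inst.imp i a b` means `a ⊳_i b` : `a` is more important than `b` for agent `i`. -/
def imp (inst : LexInstance N M) (i : N) (a b : M) : Prop := (inst.ord i).lt b a

/-- The chores of agent `i`. -/
def C (inst : LexInstance N M) (i : N) : Finset M := (inst.G i)ᶜ

/-- Strict lexicographic preference `X ≻_i Y`. -/
def SPref (inst : LexInstance N M) (i : N) (X Y : Finset M) : Prop :=
  (∃ g ∈ inst.G i ∩ (X \ Y), ∀ o ∈ Y ∩ inst.G i, inst.imp i o g → o ∈ X) ∨
  (∃ c ∈ inst.C i ∩ (Y \ X), ∀ o ∈ X ∩ inst.C i, inst.imp i o c → o ∈ Y)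

/-- Weak lexicographic preference `X ⪰_i Y`. -/
def WPref (inst : LexInstance N M) (i : N) (X Y : Finset M) : Prop :=
  inst.SPref i X Y ∨ X = Y

/-- A (complete) allocation: pairwise disjoint bundles whose union is all of `M`. -/
def IsAllocation (_inst : LexInstance N M) (A : N → Finset M) : Prop :=
  (∀ i j, i ≠ j → Disjoint (A i) (A j)) ∧ ∀ o : M, ∃ i, o ∈ A i

/-- Pareto optimality of a (complete) allocation. -/
def ParetoOptimal (inst : LexInstance N M) (A : N → Finset M) : Prop :=
  ¬ ∃ B : N → Finset M, inst.IsAllocation B ∧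
      (∀ i, inst.WPref i (B i) (A i)) ∧ ∃ h, inst.SPref h (B h) (A h)

/-- The item agent `i` picks from the remaining set `R`: its `⊳_i`-greatest
remaining good if there is one, and otherwise the `⊳_i`-least remaining item. -/
noncomputable def pickOne (inst : LexInstance N M) (i : N) (R : Finset M)
    (h : R.Nonempty) : M :=
  if hg : (R ∩ inst.G i).Nonempty then @Finset.max' M (inst.ord i) (R ∩ inst.G i) hg
  else @Finset.min' M (inst.ord i) R h

/-- Run the picking procedure along a sequence of agents, starting from the
remaining items `R`; returns the resulting bundles. -/
noncomputable def runPick (inst : LexInstance N M) : List N → Finset M → N → Finset M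
  | [], _ => fun _ => ∅
  | i :: rest, R =>
    if h : R.Nonempty then
      fun j =>
        runPick inst rest (R.erase (inst.pickOne i R h)) j ∪
          (if j = i then {inst.pickOne i R h} else ∅)
    else fun _ => ∅

/-- An allocation is sequencible if it is produced by some picking sequence of
length `|M|` starting from all items. -/
def Sequencible (inst : LexInstance N M) (A : N → Finset M) : Prop :=
  ∃ s : List N, s.length = Fintype.card M ∧ inst.runPick s Finset.univ = A

/-- A chores-only instance: every item is a chore for every agent. -/
def ChoresOnly (inst : LexInstance N M) : Prop := ∀ i, inst.G i = ∅

/-- Envy-freeness up to any item. -/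
def EFX (inst : LexInstance N M) (A : N → Finset M) : Prop :=
  ∀ i h : N,
    (∀ o ∈ A h ∩ inst.G i, inst.WPref i (A i) ((A h).erase o)) ∧
    (∀ o ∈ A i ∩ inst.C i, inst.WPref i ((A i).erase o) (A h))

/-- Envy-freeness up to any chore. -/
def EFXc (inst : LexInstance N M) (A : N → Finset M) : Prop :=
  ∀ i h : N, ∀ o ∈ A i ∩ inst.C i, inst.WPref i ((A i).erase o) (A h)

/-- Envy-freeness up to one item. -/
def EF1 (inst : LexInstance N M) (A : N → Finset M) : Prop :=
  ∀ i h : N, ((A i ∩ inst.C i) ∪ (A h ∩ inst.G i)).Nonempty →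
    ∃ o ∈ (A i ∩ inst.C i) ∪ (A h ∩ inst.G i),
      inst.WPref i (A i) ((A h).erase o) ∨ inst.WPref i ((A i).erase o) (A h)

/-- `A` gives every agent at least its maximin share: for every partition `P`
of the items into `n` bundles, agent `i` weakly prefers `A i` to some bundle of
`P` (hence to the `⪰_i`-least bundle of `P`). -/
def MMSfair (inst : LexInstance N M) (A : N → Finset M) : Prop :=
  ∀ i, ∀ P : N → Finset M, inst.IsAllocation P → ∃ j, inst.WPref i (A i) (P j)

/-- `B` is the maximin share `MMS_i` of agent `i`: `B` is the `⪰_i`-least bundle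
of some partition of `M` into `n` bundles, and every such partition contains a
bundle to which `B` is weakly preferred. -/
def IsMMSBundle (inst : LexInstance N M) (i : N) (B : Finset M) : Prop :=
  (∃ P : N → Finset M, inst.IsAllocation P ∧ (∃ j, P j = B) ∧
      ∀ j, inst.WPref i (P j) B) ∧
  (∀ P : N → Finset M, inst.IsAllocation P → ∃ j, inst.WPref i B (P j))

/-- The `k`-th (0-indexed) `⊳_i`-greatest good of agent `i`, if any. -/
noncomputable def kthGood (inst : LexInstance N M) (i : N) (k : ℕ) : Option M :=
  letI : LinearOrder M := inst.ord i
  (((inst.G i).sort (· ≤ ·)).reverse)[k]?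

/-- The `k`-th (0-indexed) `⊳_i`-least chore of agent `i`, if any. -/
noncomputable def kthChore (inst : LexInstance N M) (i : N) (k : ℕ) : Option M :=
  letI : LinearOrder M := inst.ord i
  ((inst.C i).sort  (· ≤ ·))[k]?

/-- Number of agents receiving their `k`-th (0-indexed) greatest good. -/
noncomputable def nPlus (inst : LexInstance N M) (A : N → Finset M) (k : ℕ) : ℕ :=
  (Finset.univ.filter fun i => (inst.kthGood i k).elim False (· ∈ A i)).card

/-- Number of agents receiving their `k`-th (0-indexed) least chore. -/
noncomputable def nMinus (inst : LexInstance N M) (A : N → Finset M) (k : ℕ) : ℕ :=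
  (Finset.univ.filter fun i => (inst.kthChore i k).elim False (· ∈ A i)).card

/-- The rank signature `(n_1^+, …, n_m^+, n_1^-, …, n_m^-)` of an allocation. -/
noncomputable def signature (inst : LexInstance N M) (A : N → Finset M) : List ℕ :=
  ((List.range (Fintype.card M)).map fun k => inst.nPlus A k) ++
    ((List.range (Fintype.card M)).map fun k => inst.nMinus A k)

/-- Rank-maximality: the signature is lexicographically maximal over allocations. -/
def RankMaximal (inst : LexInstance N M) (A : N → Finset M) : Prop :=
  inst.IsAllocation A ∧ ∀ B : N → Finset M, inst.IsAllocation B →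
    ¬ List.Lex (· < ·) (inst.signature A) (inst.signature B)

end LexInstance

/-- The set of the `k` greatest (most important) elements of `S` under `L`. -/
def topK {M : Type} [DecidableEq M] (L : LinearOrder M) (S : Finset M) (k : ℕ) :
    Finset M :=
  letI := L
  S.filter fun o => (S.filter fun o' => o < o').card < k

/-- Build a linear order on `Fin m` from an injective ranking function
(larger value = more important). -/
def mkOrd {m : ℕ} (f : Fin m → ℕ) (hf : Function.Injective f) : LinearOrder (Fin m) :=
  LinearOrder.lift' f hf


section auxx
variable {M : Type} [LinearOrder M]

lemma sorted_getElem_eq (l : List M) (hl : l.Pairwise (· < ·)) (o : M) (ho : o ∈ l) :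
    l[(l.filter (fun x => decide (x < o))).length]? = some o := by
  induction l with
  | nil => simp at ho
  | cons a t ih =>
    rcases List.mem_cons.1 ho with rfl | ho'
    · have h0 : (o :: t).filter (fun x => decide (x < o)) = [] := by
        rw [List.filter_eq_nil_iff]
        intro x hx
        rcases List.mem_cons.1 hx with rfl | hx'
        · simp
        · simp only [decide_eq_true_eq]
          exact not_lt.2 ((List.pairwise_cons.1 hl).1 x hx').le
      simp [h0]
    · have ha : a < o := (List.pairwise_cons.1 hl).1 o ho'
      have h2 := ih (List.pairwise_cons.1 hl).2 ho'
      simp only [List.filter_cons, decide_eq_true_eq, ha, if_true, List.length_cons]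
      simpa using h2

lemma kth_univ {M : Type} [Fintype M] [DecidableEq M] (L : LinearOrder M) (o : M) :
    letI := L
    (Finset.univ.sort (· ≤ ·))[(Finset.univ.filter (fun x => x < o)).card]? = some o := by
  letI := L
  have hs : (Finset.univ.sort (· ≤ ·) : List M).Pairwise (· < ·) := (Finset.sortedLT_sort _).pairwise
  have hmem : o ∈ Finset.univ.sort (· ≤ ·) := (Finset.mem_sort _).2 (Finset.mem_univ o)
  have key := sorted_getElem_eq _ hs o hmem
  have hlen : ((Finset.univ.sort (· ≤ ·) : List M).filter (fun x => decide (x < o))).length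
      = (Finset.univ.filter (fun x => x < o)).card := by
    rw [← List.countP_eq_length_filter]
    rw [(Finset.sort_perm_toList _ _).countP_eq]
    show Finset.univ.val.toList.countP _ = _
    rw [← Multiset.coe_countP (fun x => x < o)]
    rw [Multiset.coe_toList, Multiset.countP_eq_card_filter]
    rfl
  rwa [hlen] at key

end auxx

lemma lex_append {r : ℕ → ℕ → Prop} (l : List ℕ) {a b : List ℕ} (h : List.Lex r a b) :
    List.Lex r (l ++ a) (l ++ b) := by
  induction l with
  | nil => simpa
  | cons x t ih => exact List.Lex.cons ih

lemma lex_of_idx : ∀ (p : ℕ) (a b : List ℕ), (∀ q, q < p → a[q]? = b[q]?) →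
    ∀ {va vb : ℕ}, a[p]? = some va → b[p]? = some vb → va < vb → List.Lex (· < ·) a b
  | 0, x::a, y::b, _, va, vb, ha, hb, h => by
      have hx : x = va := by simpa using ha
      have hy : y = vb := by simpa using hb
      subst hx; subst hy
      exact List.Lex.rel h
  | p+1, x::a, y::b, hpre, va, vb, ha, hb, h => by
      have hx : x = y := by have := hpre 0 (Nat.succ_pos _); simpa using this
      subst hx
      exact List.Lex.cons (lex_of_idx p a b (fun q hq => by simpa using hpre (q+1) (by omega))
        (by simpa using ha) (by simpa using hb) h)
  | _, [], _, _, _, _, ha, _, _ => by simp at ha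
  | _+1, _::_, [], _, _, _, _, hb, _ => by simp at hb
  | 0, _::_, [], _, _, _, _, hb, _ => by simp at hb


noncomputable def idxOf {M : Type} [Fintype M] [DecidableEq M] (L : LinearOrder M) (o : M) : ℕ :=
  letI := L
  (Finset.univ.filter (fun x => x < o)).card

lemma kthChore_idxOf {N M : Type} [Fintype N] [Fintype M] [DecidableEq M]
    (inst : LexInstance N M) (hch : inst.ChoresOnly) (j : N) (o : M) :
    inst.kthChore j (idxOf (inst.ord j) o) = some o := by
  letI := inst.ord j
  have hC : inst.C j = Finset.univ := by simp [LexInstance.C, hch j]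
  show ((inst.C j).sort (· ≤ ·))[idxOf (inst.ord j) o]? = some o
  rw [hC]
  exact kth_univ (inst.ord j) o

lemma kthChore_idxOf_uniq {N M : Type} [Fintype N] [Fintype M] [DecidableEq M]
    (inst : LexInstance N M) (hch : inst.ChoresOnly) (j : N) (o : M) (k : ℕ)
    (h : inst.kthChore j k = some o) : k = idxOf (inst.ord j) o := by
  letI := inst.ord j
  have h1 : ((inst.C j).sort (· ≤ ·))[idxOf (inst.ord j) o]? = some o :=
    kthChore_idxOf inst hch j o
  have hnd : ((inst.C j).sort (· ≤ ·)).Nodup := Finset.sort_nodup _ _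
  have hk' : (((inst.C j).sort (· ≤ ·)) : List M)[k]? = some o := h
  have hk2 : k < ((inst.C j).sort (· ≤ ·)).length := by
    by_contra hcon
    rw [List.getElem?_eq_none (le_of_not_gt hcon)] at hk'
    simp at hk'
  exact (List.getElem?_inj hk2 hnd).1 (hk'.trans h1.symm)

lemma idxOf_top {M : Type} [Fintype M] [DecidableEq M] (L : LinearOrder M) (o : M)
    (hmax : ∀ x, L.le x o) : idxOf L o = Fintype.card M - 1 := by
  letI := L
  unfold idxOf
  have he : Finset.univ.filter (fun x => x < o) = Finset.univ.erase o := by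
    ext x
    simp only [Finset.mem_filter, Finset.mem_univ, true_and, Finset.mem_erase, and_true]
    rw [lt_iff_le_and_ne]
    simp [hmax x]
  rw [he, Finset.card_erase_of_mem (Finset.mem_univ o), Finset.card_univ]

lemma idxOf_lt_top {M : Type} [Fintype M] [DecidableEq M] (L : LinearOrder M) (o o' : M)
    (h : L.lt o o') : idxOf L o + 2 ≤ Fintype.card M := by
  letI := L
  have hsub : Finset.univ.filter (fun x => x < o) ⊆ (Finset.univ.erase o').erase o := by
    intro x hx
    simp only [Finset.mem_filter, Finset.mem_univ, true_and] at hx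
    refine Finset.mem_erase.2 ⟨ne_of_lt hx, Finset.mem_erase.2 ⟨?_, Finset.mem_univ x⟩⟩
    exact ne_of_lt (hx.trans h)
  have hc := Finset.card_le_card hsub
  have h1 : o ∈ Finset.univ.erase o' := Finset.mem_erase.2 ⟨ne_of_lt h, Finset.mem_univ o⟩
  rw [Finset.card_erase_of_mem h1, Finset.card_erase_of_mem (Finset.mem_univ o'),
    Finset.card_univ] at hc
  have hcard : 2 ≤ Fintype.card M := Fintype.one_lt_card_iff_nontrivial.2 ⟨o, o', ne_of_lt h⟩
  unfold idxOf
  omega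

/-- in a chores-only lexicographic instance, if a rank-maximal
allocation assigns to some agent `i` its worst chore `o` (the `⊳_i`-greatest
element of `M`), then `o` is the worst chore of every agent. -/
theorem rm_worst_chore_common
    {N M : Type} [Fintype N] [Fintype M] [DecidableEq M]
    (inst : LexInstance N M) (hch : inst.ChoresOnly)
    (A : N → Finset M) (hRM : inst.RankMaximal A)
    (i : N) (o : M) (ho : o ∈ A i) (hmax : ∀ o' : M, (inst.ord i).le o' o) :
    ∀ j : N, ∀ o' : M, (inst.ord j).le o' o := by
  intro j o'
  by_contra hno
  have hoo' : (inst.ord j).lt o o' := by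
    letI := inst.ord j
    exact lt_of_not_ge hno
  rcases eq_or_ne j i with rfl | hij
  · exact hno (hmax o')
  set kj := idxOf (inst.ord j) o with hkjdef
  have hki : idxOf (inst.ord i) o = Fintype.card M - 1 := idxOf_top (inst.ord i) o hmax
  have hkjlt : kj + 2 ≤ Fintype.card M := idxOf_lt_top (inst.ord j) o o' hoo'
  have hkj : inst.kthChore j kj = some o := kthChore_idxOf inst hch j o
  have huj : ∀ k, inst.kthChore j k = some o → k = kj :=
    fun k h => kthChore_idxOf_uniq inst hch j o k h
  have hui : ∀ k, inst.kthChore i k = some o → k = Fintype.card M - 1 :=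
    fun k h => (kthChore_idxOf_uniq inst hch i o k h).trans hki
  have hdisj := hRM.1.1
  have hoAj : o ∉ A j := fun hmem =>
    Finset.disjoint_left.1 (hdisj i j (Ne.symm hij)) ho hmem
  set B : N → Finset M := fun t =>
    if t = i then (A i).erase o else if t = j then insert o (A j) else A t with hB
  have hBi : B i = (A i).erase o := by simp [hB]
  have hBj : B j = insert o (A j) := by simp [hB, hij]
  have hBt : ∀ t, t ≠ i → t ≠ j → B t = A t := by intro t h1 h2; simp [hB, h1, h2]
  have hBmem : ∀ t x, x ∈ B t ↔ (x ∈ A t ∧ x ≠ o) ∨ (x = o ∧ t = j) := by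
    intro t x
    by_cases hti : t = i
    · rw [hti, hBi, Finset.mem_erase]
      constructor
      · rintro ⟨h1, h2⟩; exact Or.inl ⟨h2, h1⟩
      · rintro (⟨h1, h2⟩ | ⟨rfl, h3⟩)
        · exact ⟨h2, h1⟩
        · exact absurd h3 (Ne.symm hij)
    · by_cases htj : t = j
      · rw [htj, hBj, Finset.mem_insert]
        constructor
        · rintro (rfl | hx)
          · exact Or.inr ⟨rfl, rfl⟩
          · exact Or.inl ⟨hx, fun h => hoAj (h ▸ hx)⟩
        · rintro (⟨h1, _⟩ | ⟨rfl, _⟩)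
          · exact Or.inr h1
          · exact Or.inl rfl
      · rw [hBt t hti htj]
        constructor
        · intro hx
          refine Or.inl ⟨hx, fun h => ?_⟩
          exact Finset.disjoint_left.1 (hdisj t i hti) (h ▸ hx) ho
        · rintro (⟨h1, _⟩ | ⟨rfl, h2⟩)
          · exact h1
          · exact absurd h2 htj
  have hBalloc : inst.IsAllocation B := by
    constructor
    · intro s t hst
      rw [Finset.disjoint_left]
      intro x hxs hxt
      rcases (hBmem s x).1 hxs with ⟨hxAs, hxo⟩ | ⟨hx1, rfl⟩
      · rcases (hBmem t x).1 hxt with ⟨hxAt, _⟩ | ⟨hx2, rfl⟩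
        · exact Finset.disjoint_left.1 (hdisj s t hst) hxAs hxAt
        · exact hxo hx2
      · rcases (hBmem t x).1 hxt with ⟨_, hxo⟩ | ⟨_, rfl⟩
        · exact hxo hx1
        · exact hst rfl
    · intro x
      rcases hRM.1.2 x with ⟨t, hxt⟩
      by_cases hx : x = o
      · exact ⟨j, (hBmem j x).2 (Or.inr ⟨hx, rfl⟩)⟩
      · exact ⟨t, (hBmem t x).2 (Or.inl ⟨hxt, hx⟩)⟩
  have hkg : ∀ (t : N) (k : ℕ), inst.kthGood t k = none := by
    intro t k
    simp [LexInstance.kthGood, hch t]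
  have hplus : ∀ (X : N → Finset M) (k : ℕ), inst.nPlus X k = 0 := by
    intro X k
    simp [LexInstance.nPlus, hkg]
  have hQ1 : ∀ (k : ℕ) (t : N), k ≤ kj → t ≠ j →
      ((inst.kthChore t k).elim False (· ∈ B t) ↔ (inst.kthChore t k).elim False (· ∈ A t)) := by
    intro k t hk htj
    cases hkc : inst.kthChore t k with
    | none => simp
    | some x =>
      simp only [Option.elim]
      by_cases hti : t = i
      · have hxo : x ≠ o := by
          intro hxe
          rw [hxe, hti] at hkc
          have := hui k hkc
          omega
        rw [hti, hBi, Finset.mem_erase]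
        simp [hxo]
      · rw [hBt t hti htj]
  have hQ2 : ∀ (k : ℕ) (t : N), k < kj →
      ((inst.kthChore t k).elim False (· ∈ B t) ↔ (inst.kthChore t k).elim False (· ∈ A t)) := by
    intro k t hk
    by_cases htj : t = j
    · cases hkc : inst.kthChore t k with
      | none => simp
      | some x =>
        simp only [Option.elim]
        have hxo : x ≠ o := by
          intro hxe
          rw [hxe, htj] at hkc
          have := huj k hkc
          omega
        rw [htj, hBj, Finset.mem_insert]
        simp [hxo]
    · exact hQ1 k t (le_of_lt hk) htj
  have heqmin : ∀ k, k < kj → inst.nMinus B k = inst.nMinus A k := by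
    intro k hk
    unfold LexInstance.nMinus
    congr 1
    apply Finset.filter_congr
    intro t _
    exact hQ2 k t hk
  have hstep : inst.nMinus A kj < inst.nMinus B kj := by
    unfold LexInstance.nMinus
    have hset : (Finset.univ.filter fun t => (inst.kthChore t kj).elim False (· ∈ B t))
        = insert j (Finset.univ.filter fun t => (inst.kthChore t kj).elim False (· ∈ A t)) := by
      ext t
      simp only [Finset.mem_insert, Finset.mem_filter, Finset.mem_univ, true_and]
      by_cases htj : t = j
      · rw [htj, hkj]
        simp only [Option.elim, true_or, iff_true]
        rw [hBj]
        exact Finset.mem_insert_self o (A j)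
      · rw [hQ1 kj t le_rfl htj]
        simp [htj]
    rw [hset, Finset.card_insert_of_notMem]
    · exact Nat.lt_succ_self _
    · simp only [Finset.mem_filter, Finset.mem_univ, true_and]
      rw [hkj]
      simpa using hoAj
  refine hRM.2 B hBalloc ?_
  unfold LexInstance.signature
  have hplist : ((List.range (Fintype.card M)).map fun k => inst.nPlus A k)
      = ((List.range (Fintype.card M)).map fun k => inst.nPlus B k) := by
    apply List.map_congr_left
    intro k _
    rw [hplus, hplus]
  rw [hplist]
  apply lex_append
  have hkjm : kj < Fintype.card M := by omega
  refine lex_of_idx kj _ _ (fun q hq => ?_) ?_ ?_ hstep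
  · rw [List.getElem?_map, List.getElem?_map, List.getElem?_range (by omega : q < Fintype.card M)]
    simp [heqmin q hq]
  · rw [List.getElem?_map, List.getElem?_range hkjm]
    rfl
  · rw [List.getElem?_map, List.getElem?_range hkjm]
    rfl
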